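/- Under the Setup, assume: r ≥ 2; |C| ≥ r; each family {p_c(h)}_{c∈C} is an (r,C)-partition system on U_h; ℰ is nonempty; every label set is an initial segment L_j = {1, …, |L_j|} with |L_j| ≥ 2; every vertex of G has the same degree; for some real δ ≥ 0 with r⁷δ < 1, every labeling weakly satisfies at most δ|ℰ| edges of G; and the pairs (v,ℓ) are embedded on the real line by a map x with |x(v,ℓ) − x(v,ℓ')| = |ℓ − ℓ'| for all v and all ℓ, ℓ' ∈ L_{j(v)}, and |x(v,ℓ) − x(v',ℓ')| ≥ 2 whenever v ≠ v' (so distinct pairs are at distance at least 1). For e ∈ U let S(e) = {(v,ℓ) : e ∈ X(v,ℓ)}. Then for every set F of pairs (v,ℓ) with |F| = (Σ_{v∈𝒱} |L_{j(v)}|) − |𝒱|, there exists e ∈ U with Σ_{(v,ℓ)∈S(e)} min_{p∈F} |x(v,ℓ) − x(p)| ≥ r. -/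

import Mathlib

/-- `v` is a vertex of the edge `h` (edges of an `r`-partite hypergraph are given as
tuples of their `r` vertices, one from each part). -/
def MemEdge {r : ℕ} {V : Type} (h : Fin r → V) (v : V) : Prop := ∃ i : Fin r, h i = v

/-- The set `X(v,ℓ) = ⋃_{h ∈ E : v ∈ h} A^{j(v)}_{π_h^{j(v)}(ℓ)}(h)`. -/
def Xset {r : ℕ} {V L C U : Type} (part : V → Fin r) (E : Set (Fin r → V))
    (π : (Fin r → V) → Fin r → L → C) (A : (Fin r → V) → C → Fin r → Set U)
    (v : V) (ℓ : L) : Set U :=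
  {e : U | ∃ h ∈ E, MemEdge h v ∧ e ∈ A h (π h (part v) ℓ) (part v)}

lemma one_le_abs_nat_sub {a b : ℕ} (h : a ≠ b) : (1:ℝ) ≤ |(a:ℝ) - b| := by
  have h1 : (1:ℤ) ≤ |(a:ℤ) - (b:ℤ)| := by rw [Int.abs_eq_natAbs]; omega
  exact_mod_cast h1

lemma valid_finite {r : ℕ} {V : Type} [Fintype V] (part : V → Fin r) (n : Fin r → ℕ) :
    {q : V × ℕ | q.2 ∈ Set.Icc 1 (n (part q.1))}.Finite := by
  classical
  apply Set.Finite.subset (Set.finite_univ.prod (Set.finite_Icc 1 (Finset.univ.sup n)))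
  rintro ⟨v, ℓ⟩ hq
  simp only [Set.mem_setOf_eq, Set.mem_Icc] at hq
  exact ⟨Set.mem_univ _, Set.mem_Icc.2 ⟨hq.1, hq.2.trans (Finset.le_sup (Finset.mem_univ _))⟩⟩

/-- Construction lemma: from an edge `h` and `r` missing points with consistent colors,
build a common element `e` whose star has cost at least `r`. -/
lemma construction {r : ℕ} (hr : 2 ≤ r) {V C U : Type} [Fintype V] [Fintype C]
    (hC : r ≤ Fintype.card C)
    (part : V → Fin r) (E : Set (Fin r → V))
    (π : (Fin r → V) → Fin r → ℕ → C)
    (n : Fin r → ℕ)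
    (A : (Fin r → V) → C → Fin r → Set U)
    (hAint : ∀ h ∈ E, ∀ cs : Fin r → C, Function.Injective cs → ∀ js : Fin r → Fin r,
      (⋂ i : Fin r, A h (cs i) (js i)).Nonempty)
    (x : V × ℕ → ℝ)
    (hx1 : ∀ v : V, ∀ ℓ ∈ Set.Icc 1 (n (part v)), ∀ ℓ' ∈ Set.Icc 1 (n (part v)),
      |x (v, ℓ) - x (v, ℓ')| = |(ℓ : ℝ) - (ℓ' : ℝ)|)
    (hx2 : ∀ v v' : V, v ≠ v' → ∀ ℓ ∈ Set.Icc 1 (n (part v)),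
      ∀ ℓ' ∈ Set.Icc 1 (n (part v')), (2 : ℝ) ≤ |x (v, ℓ) - x (v', ℓ')|)
    (F : Set (V × ℕ)) (hFsub : F ⊆ {q : V × ℕ | q.2 ∈ Set.Icc 1 (n (part q.1))})
    (hFne : F.Nonempty)
    (h : Fin r → V) (hh : h ∈ E)
    (Q : Finset (V × ℕ)) (hQcard : Q.card = r)
    (hQ : ∀ q ∈ Q, MemEdge h q.1 ∧ q.2 ∈ Set.Icc 1 (n (part q.1)) ∧ q ∉ F)
    (hcons : ∀ q ∈ Q, ∀ q' ∈ Q,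
      π h (part q.1) q.2 = π h (part q'.1) q'.2 → part q.1 = part q'.1) :
    ∃ e : U, (r : ℝ) ≤
      ∑ᶠ p ∈ {q : V × ℕ | q.2 ∈ Set.Icc 1 (n (part q.1)) ∧ e ∈ Xset part E π A q.1 q.2},
        sInf ((fun q : V × ℕ => |x p - x q|) '' F) := by
  classical
  set col : V × ℕ → C := fun q => π h (part q.1) q.2 with hcol
  set D : Finset C := Q.image col with hD
  have hDcard : D.card ≤ r := le_trans (Finset.card_image_le) (le_of_eq hQcard)
  obtain ⟨D', hDD', hD'card⟩ := Finset.exists_superset_card_eq hDcard hC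
  set eqv : (D' : Finset C) ≃ Fin r := D'.equivFinOfCardEq hD'card with heqv
  set cs : Fin r → C := fun i => (eqv.symm i : C) with hcs
  have hcsinj : Function.Injective cs := by
    intro i j hij
    exact eqv.symm.injective (Subtype.ext hij)
  -- part assignment for each color
  set jpart : C → Fin r := fun c =>
    if hq : ∃ q ∈ Q, col q = c then part (Classical.choose hq).1 else ⟨0, by omega⟩ with hjp
  obtain ⟨e, he⟩ := hAint h hh cs hcsinj (fun i => jpart (cs i))
  refine ⟨e, ?_⟩
  have hkey : ∀ q ∈ Q, e ∈ Xset part E π A q.1 q.2 := by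
    intro q hq
    have hcmem : col q ∈ D' := hDD' (Finset.mem_image_of_mem col hq)
    have hcsval : cs (eqv ⟨col q, hcmem⟩) = col q := by
      simp [hcs]
    have heA : e ∈ A h (cs (eqv ⟨col q, hcmem⟩)) (jpart (cs (eqv ⟨col q, hcmem⟩))) :=
      Set.mem_iInter.1 he _
    rw [hcsval] at heA
    have hex : ∃ q' ∈ Q, col q' = col q := ⟨q, hq, rfl⟩
    have hjval : jpart (col q) = part q.1 := by
      rw [hjp]
      simp only [hex, dif_pos]
      obtain ⟨hq', hcq'⟩ := Classical.choose_spec hex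
      exact hcons _ hq' _ hq hcq'
    rw [hjval] at heA
    exact ⟨h, hh, (hQ q hq).1, heA⟩
  -- the star set is finite
  set S : Set (V × ℕ) :=
    {q : V × ℕ | q.2 ∈ Set.Icc 1 (n (part q.1)) ∧ e ∈ Xset part E π A q.1 q.2} with hS
  have hSfin : S.Finite := (valid_finite part n).subset (fun q hq => hq.1)
  rw [finsum_mem_eq_finite_toFinset_sum _ hSfin]
  have hQsub : Q ⊆ hSfin.toFinset := by
    intro q hq
    rw [Set.Finite.mem_toFinset]
    exact ⟨(hQ q hq).2.1, hkey q hq⟩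
  have hnonneg : ∀ p ∈ hSfin.toFinset, p ∉ Q →
      0 ≤ sInf ((fun q : V × ℕ => |x p - x q|) '' F) := by
    intro p _ _
    apply Real.sInf_nonneg
    rintro b ⟨q, _, rfl⟩
    exact abs_nonneg _
  have hterm : ∀ q ∈ Q, (1:ℝ) ≤ sInf ((fun q' : V × ℕ => |x q - x q'|) '' F) := by
    rintro ⟨v, ℓ⟩ hq
    apply le_csInf (hFne.image _)
    rintro b ⟨⟨w, ℓ'⟩, hw, rfl⟩
    dsimp only
    have hℓ : ℓ ∈ Set.Icc 1 (n (part v)) := (hQ _ hq).2.1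
    have hℓ' : ℓ' ∈ Set.Icc 1 (n (part w)) := hFsub hw
    by_cases hvw : v = w
    · subst hvw
      have hne : ℓ ≠ ℓ' := by
        rintro rfl
        exact (hQ _ hq).2.2 hw
      rw [hx1 v ℓ hℓ ℓ' hℓ']
      exact one_le_abs_nat_sub hne
    · linarith [hx2 v w hvw ℓ hℓ ℓ' hℓ']
  calc (r:ℝ) = ∑ q ∈ Q, (1:ℝ) := by simp [hQcard]
    _ ≤ ∑ q ∈ Q, sInf ((fun q' : V × ℕ => |x q - x q'|) '' F) :=
        Finset.sum_le_sum hterm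
    _ ≤ ∑ p ∈ hSfin.toFinset, sInf ((fun q : V × ℕ => |x p - x q|) '' F) :=
        Finset.sum_le_sum_of_subset_of_nonneg hQsub hnonneg

open Classical in
lemma double_count {r : ℕ} {V : Type} [Fintype V]
    (E : Set (Fin r → V)) (hEfin : E.Finite)
    (part : V → Fin r) (hE : ∀ h ∈ E, ∀ i : Fin r, part (h i) = i)
    (f : V → ℕ) :
    ∑ h ∈ hEfin.toFinset, ∑ i : Fin r, f (h i)
      = ∑ v : V, (hEfin.toFinset.filter (fun h => MemEdge h v)).card * f v := by
  classical
  have h1 : ∀ h ∈ hEfin.toFinset, ∑ i : Fin r, f (h i)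
      = ∑ v ∈ Finset.univ.filter (fun v => MemEdge h v), f v := by
    intro h hh
    have hhE : h ∈ E := hEfin.mem_toFinset.1 hh
    have hinj : Function.Injective h := by
      intro i j hij
      have h1 := hE h hhE i
      rw [hij, hE h hhE j] at h1
      exact h1.symm
    have himg : Finset.univ.filter (fun v => MemEdge h v) = Finset.univ.image h := by
      ext v
      simp [MemEdge, eq_comm]
    rw [himg, Finset.sum_image (fun i _ j _ hij => hinj hij)]
  rw [Finset.sum_congr rfl h1]
  have h2 : ∀ h : Fin r → V, ∑ v ∈ Finset.univ.filter (fun v => MemEdge h v), f v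
      = ∑ v : V, if MemEdge h v then f v else 0 := fun h => Finset.sum_filter _ _
  rw [Finset.sum_congr rfl (fun h _ => h2 h), Finset.sum_comm]
  refine Finset.sum_congr rfl fun v _ => ?_
  rw [← Finset.sum_filter, Finset.sum_const, smul_eq_mul]

/-- **No-instance lemma (line metric).**
In the Setup, assume: `r ≥ 2`; `|C| ≥ r`; each `{(A h c 1, …, A h c r)}_{c ∈ C}` is an
`(r,C)`-partition system on `Uh h`; `E` is (finite and) nonempty; the label sets are
initial segments `L_j = {1, …, n j}` with `n j ≥ 2`; every vertex of `G` has the same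
degree; for some real `δ ≥ 0` with `r⁷·δ < 1`, every labeling weakly satisfies at most
`δ·|E|` edges; and the locations `(v,ℓ)` are embedded on the real line by `x` with
`|x(v,ℓ) − x(v,ℓ')| = |ℓ − ℓ'|` within a vertex and `|x(v,ℓ) − x(v',ℓ')| ≥ 2` across
vertices. With `S(e) = {(v,ℓ) : ℓ ∈ L_{j(v)}, e ∈ X(v,ℓ)}`, every facility set `F` of
locations with `|F| = (Σ_{v} |L_{j(v)}|) − |𝒱|` admits an element `e ∈ U` with
`Σ_{p ∈ S(e)} min_{q ∈ F} |x p − x q| ≥ r`. -/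
theorem stmt12 {r : ℕ} (hr : 2 ≤ r) {V C U : Type} [Fintype V] [Fintype C]
    (hC : r ≤ Fintype.card C)
    (part : V → Fin r) (E : Set (Fin r → V)) (hEfin : E.Finite) (hEne : E.Nonempty)
    (hE : ∀ h ∈ E, ∀ i : Fin r, part (h i) = i)
    (n : Fin r → ℕ) (hn : ∀ j, 2 ≤ n j)
    (π : (Fin r → V) → Fin r → ℕ → C)
    (Uh : (Fin r → V) → Set U) (hUfin : ∀ h ∈ E, (Uh h).Finite)
    (hUdisj : ∀ h ∈ E, ∀ h' ∈ E, h ≠ h' → Disjoint (Uh h) (Uh h'))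
    (hUcover : ∀ e : U, ∃ h ∈ E, e ∈ Uh h)
    (A : (Fin r → V) → C → Fin r → Set U)
    (hApart : ∀ h ∈ E, ∀ c : C, (⋃ j : Fin r, A h c j) = Uh h)
    (hAdisj : ∀ h ∈ E, ∀ c : C, ∀ j j' : Fin r, j ≠ j' → Disjoint (A h c j) (A h c j'))
    (hAint : ∀ h ∈ E, ∀ cs : Fin r → C, Function.Injective cs → ∀ js : Fin r → Fin r,
      (⋂ i : Fin r, A h (cs i) (js i)).Nonempty)
    (hdeg : ∀ v w : V, ({h ∈ E | MemEdge h v}).ncard = ({h ∈ E | MemEdge h w}).ncard)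
    (δ : ℝ) (hδ : 0 ≤ δ) (hδr : (r : ℝ) ^ 7 * δ < 1)
    (hsound : ∀ σ : V → ℕ, (∀ v : V, σ v ∈ Set.Icc 1 (n (part v))) →
      (({h ∈ E | ∃ v v' : V, MemEdge h v ∧ MemEdge h v' ∧ v ≠ v' ∧
        π h (part v) (σ v) = π h (part v') (σ v')}).ncard : ℝ) ≤ δ * (E.ncard : ℝ))
    (x : V × ℕ → ℝ)
    (hx1 : ∀ v : V, ∀ ℓ ∈ Set.Icc 1 (n (part v)), ∀ ℓ' ∈ Set.Icc 1 (n (part v)),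
      |x (v, ℓ) - x (v, ℓ')| = |(ℓ : ℝ) - (ℓ' : ℝ)|)
    (hx2 : ∀ v v' : V, v ≠ v' → ∀ ℓ ∈ Set.Icc 1 (n (part v)),
      ∀ ℓ' ∈ Set.Icc 1 (n (part v')), (2 : ℝ) ≤ |x (v, ℓ) - x (v', ℓ')|) :
    ∀ F : Set (V × ℕ), F ⊆ {q : V × ℕ | q.2 ∈ Set.Icc 1 (n (part q.1))} →
      F.ncard = (∑ v : V, n (part v)) - Fintype.card V →
      ∃ e : U, (r : ℝ) ≤
        ∑ᶠ p ∈ {q : V × ℕ | q.2 ∈ Set.Icc 1 (n (part q.1)) ∧ e ∈ Xset part E π A q.1 q.2},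
          sInf ((fun q : V × ℕ => |x p - x q|) '' F) := by
  classical
  intro F hFsub hFcard
  -- basic facts
  have hFfin : F.Finite := (valid_finite part n).subset hFsub
  set Efin : Finset (Fin r → V) := hEfin.toFinset with hEfindef
  have hEcard : E.ncard = Efin.card := Set.ncard_eq_toFinset_card E hEfin
  have hEpos : 1 ≤ Efin.card := Finset.card_pos.2 (by
    obtain ⟨h₀, hh₀⟩ := hEne; exact ⟨h₀, hEfin.mem_toFinset.2 hh₀⟩)
  have hVne : Nonempty V := by
    obtain ⟨h₀, hh₀⟩ := hEne
    exact ⟨h₀ ⟨0, by omega⟩⟩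
  have hVpos : 1 ≤ Fintype.card V := Fintype.card_pos
  have hsum2 : 2 * Fintype.card V ≤ ∑ v : V, n (part v) := by
    calc 2 * Fintype.card V = ∑ _v : V, 2 := by
          rw [Finset.sum_const, smul_eq_mul, Finset.card_univ, mul_comm]
      _ ≤ ∑ v : V, n (part v) := Finset.sum_le_sum fun v _ => hn (part v)
  have hFne : F.Nonempty := by
    apply Set.nonempty_of_ncard_ne_zero
    omega
  -- missing labels
  set Miss : V → Finset ℕ :=
    fun v => (Finset.Icc 1 (n (part v))).filter (fun ℓ => (v, ℓ) ∉ F) with hMiss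
  set M : V → ℕ := fun v => (Miss v).card with hM
  have hMissIcc : ∀ v, ∀ ℓ ∈ Miss v, ℓ ∈ Set.Icc 1 (n (part v)) := by
    intro v ℓ hℓ
    rw [hMiss] at hℓ
    exact Set.mem_Icc.2 (Finset.mem_Icc.1 (Finset.mem_filter.1 hℓ).1)
  have hMissF : ∀ v, ∀ ℓ ∈ Miss v, (v, ℓ) ∉ F := by
    intro v ℓ hℓ
    exact (Finset.mem_filter.1 hℓ).2
  -- counting missing labels
  have hMsum : ∑ v : V, M v = Fintype.card V := by
    set Fhit : V → Finset ℕ :=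
      fun v => (Finset.Icc 1 (n (part v))).filter (fun ℓ => (v, ℓ) ∈ F) with hFhit
    have hsplit : ∀ v, (Fhit v).card + M v = n (part v) := by
      intro v
      have h1 := Finset.card_filter_add_card_filter_not
        (s := Finset.Icc 1 (n (part v))) (p := fun ℓ => (v, ℓ) ∈ F)
      rw [Nat.card_Icc] at h1
      have h2 : (Finset.filter (fun ℓ => ¬ (v, ℓ) ∈ F) (Finset.Icc 1 (n (part v)))).card = M v := rfl
      have h2' : (Finset.filter (fun ℓ => (v, ℓ) ∈ F) (Finset.Icc 1 (n (part v)))).card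
          = (Fhit v).card := rfl
      omega
    have hFcount : hFfin.toFinset.card = ∑ v : V, (Fhit v).card := by
      rw [Finset.card_eq_sum_card_fiberwise
        (f := Prod.fst) (t := Finset.univ) (fun q _ => Finset.mem_univ _)]
      refine Finset.sum_congr rfl fun v _ => ?_
      apply Finset.card_bij (fun q _ => q.2)
      · intro q hq
        rw [Finset.mem_filter, Set.Finite.mem_toFinset] at hq
        obtain ⟨hqF, hqv⟩ := hq
        refine Finset.mem_filter.2 ⟨?_, ?_⟩
        · have hIcc := hFsub hqF
          rw [Set.mem_setOf_eq, hqv] at hIcc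
          exact Finset.mem_Icc.2 (Set.mem_Icc.1 hIcc)
        · rw [← hqv]
          simpa using hqF
      · intro q hq q' hq' hqq
        rw [Finset.mem_filter, Set.Finite.mem_toFinset] at hq hq'
        exact Prod.ext (hq.2.trans hq'.2.symm) hqq
      · intro ℓ hℓ
        rw [hFhit, Finset.mem_filter] at hℓ
        refine ⟨(v, ℓ), ?_, rfl⟩
        rw [Finset.mem_filter, Set.Finite.mem_toFinset]
        exact ⟨hℓ.2, rfl⟩
    have h3 : ∑ v : V, ((Fhit v).card + M v) = ∑ v : V, n (part v) :=
      Finset.sum_congr rfl fun v _ => hsplit v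
    rw [Finset.sum_add_distrib] at h3
    have h4 : F.ncard = ∑ v : V, (Fhit v).card := by
      rw [Set.ncard_eq_toFinset_card F hFfin, hFcount]
    omega
  -- degrees
  set deg : V → ℕ := fun v => (Efin.filter (fun h => MemEdge h v)).card with hdegdef
  have hdegncard : ∀ v, ({h ∈ E | MemEdge h v}).ncard = deg v := by
    intro v
    rw [hdegdef]
    have : {h ∈ E | MemEdge h v} = ↑(Efin.filter (fun h => MemEdge h v)) := by
      ext h
      simp [hEfindef, Set.Finite.mem_toFinset, Set.mem_setOf_eq]
    rw [this, Set.ncard_coe_finset]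
  have hdeg' : ∀ v w, deg v = deg w := by
    intro v w
    have := hdeg v w
    rwa [hdegncard, hdegncard] at this
  obtain ⟨v₀⟩ := hVne
  set d : ℕ := deg v₀ with hd
  have hdc : ∀ f : V → ℕ, ∑ h ∈ Efin, ∑ i : Fin r, f (h i) = d * ∑ v : V, f v := by
    intro f
    have h1 := double_count E hEfin part hE f
    have h2 : ∀ v : V, (hEfin.toFinset.filter (fun h => MemEdge h v)).card * f v
        = d * f v := by
      intro v
      have : (hEfin.toFinset.filter (fun h => MemEdge h v)).card = deg v := rfl
      rw [this, hdeg' v v₀]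
    calc ∑ h ∈ Efin, ∑ i : Fin r, f (h i)
        = ∑ v : V, (hEfin.toFinset.filter (fun h => MemEdge h v)).card * f v := h1
      _ = ∑ v : V, d * f v := Finset.sum_congr rfl fun v _ => h2 v
      _ = d * ∑ v : V, f v := by rw [Finset.mul_sum]
  have hdcard : Efin.card * r = d * Fintype.card V := by
    have := hdc (fun _ => 1)
    simpa [Finset.sum_const, Finset.card_univ, mul_comm] using this
  have hTsum : ∑ h ∈ Efin, ∑ i : Fin r, M (h i) = r * Efin.card := by
    rw [hdc M, hMsum, ← hdcard, mul_comm]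
  -- CASE SPLIT
  by_cases hA : ∃ v, r ≤ M v
  · -- one vertex with many missing labels
    obtain ⟨v, hv⟩ := hA
    have hdpos : 0 < d := by
      have hpos : 0 < Efin.card * r := Nat.mul_pos hEpos (lt_of_lt_of_le two_pos hr)
      rw [hdcard] at hpos
      exact Nat.pos_of_mul_pos_left (by rwa [mul_comm] at hpos)
    have hdegv : 0 < deg v := by rw [hdeg' v v₀]; exact hdpos
    obtain ⟨h, hhmem⟩ := Finset.card_pos.1 hdegv
    have hhE : h ∈ E := hEfin.mem_toFinset.1 (Finset.mem_filter.1 hhmem).1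
    have hhv : MemEdge h v := (Finset.mem_filter.1 hhmem).2
    obtain ⟨Mr, hMrsub, hMrcard⟩ := Finset.exists_subset_card_eq hv
    set Q : Finset (V × ℕ) := Mr.image (fun ℓ => (v, ℓ)) with hQdef
    have hQcard : Q.card = r := by
      rw [hQdef, Finset.card_image_of_injective _ (fun a b hab => (Prod.ext_iff.1 hab).2), hMrcard]
    apply construction hr hC part E π n A hAint x hx1 hx2 F hFsub hFne h hhE Q hQcard
    · rintro q hq
      obtain ⟨ℓ, hℓ, rfl⟩ := Finset.mem_image.1 hq
      exact ⟨hhv, hMissIcc v _ (hMrsub hℓ), hMissF v _ (hMrsub hℓ)⟩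
    · rintro q hq q' hq' _
      obtain ⟨ℓ, _, rfl⟩ := Finset.mem_image.1 hq
      obtain ⟨ℓ', _, rfl⟩ := Finset.mem_image.1 hq'
      rfl
  · push_neg at hA
    -- plentiful edges
    set P : Finset (Fin r → V) := Efin.filter (fun h => r ≤ ∑ i : Fin r, M (h i)) with hPdef
    have hPbound : Efin.card ≤ P.card * (r * r) := by
      obtain ⟨s, hs⟩ : ∃ s, r = s + 2 := ⟨r - 2, (Nat.sub_add_cancel hr).symm⟩
      have hstep : ∀ h : Fin r → V, ∑ i : Fin r, M (h i) ≤ r * (s+1) := by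
        intro h
        calc ∑ i : Fin r, M (h i) ≤ ∑ _i : Fin r, (s+1) :=
              Finset.sum_le_sum (fun i _ => by
                exact Nat.lt_succ_iff.1 (lt_of_lt_of_eq (hA (h i)) hs))
          _ = r * (s+1) := by
              rw [Finset.sum_const, Finset.card_univ, Fintype.card_fin, smul_eq_mul]
      have hPle : ∑ h ∈ P, ∑ i : Fin r, M (h i) ≤ P.card * (r * (s+1)) := by
        have := Finset.sum_le_card_nsmul P (fun h => ∑ i : Fin r, M (h i)) (r * (s+1))
          (fun h _ => hstep h)
        simpa [smul_eq_mul] using this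
      have hNle : ∑ h ∈ Efin.filter (fun h => ¬ r ≤ ∑ i : Fin r, M (h i)), ∑ i : Fin r, M (h i)
          ≤ Efin.card * (s+1) := by
        calc ∑ h ∈ Efin.filter (fun h => ¬ r ≤ ∑ i : Fin r, M (h i)), ∑ i : Fin r, M (h i)
            ≤ (Efin.filter (fun h => ¬ r ≤ ∑ i : Fin r, M (h i))).card * (s+1) := by
              have := Finset.sum_le_card_nsmul
                (Efin.filter (fun h => ¬ r ≤ ∑ i : Fin r, M (h i)))
                (fun h => ∑ i : Fin r, M (h i)) (s+1)
                (fun h hh => Nat.lt_succ_iff.1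
                  (lt_of_lt_of_eq (Nat.lt_of_not_le (Finset.mem_filter.1 hh).2) hs))
              simpa [smul_eq_mul] using this
          _ ≤ Efin.card * (s+1) := Nat.mul_le_mul_right _ (Finset.card_filter_le _ _)
      have hsplit := Finset.sum_filter_add_sum_filter_not Efin
        (fun h => r ≤ ∑ i : Fin r, M (h i)) (fun h => ∑ i : Fin r, M (h i))
      have hmain : r * Efin.card ≤ P.card * (r * (s+1)) + Efin.card * (s+1) := by
        rw [← hTsum, ← hsplit]
        exact Nat.add_le_add hPle hNle
      subst hs
      have e1 : (s+2) * Efin.card = Efin.card * (s+1) + Efin.card := by ring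
      have e2 : P.card * ((s+2) * (s+1)) ≤ P.card * ((s+2) * (s+2)) :=
        Nat.mul_le_mul_left _ (Nat.mul_le_mul_left _ (Nat.le_succ (s+1)))
      linarith [hmain, e1, e2]
    clear hTsum hdc hdcard
    by_cases hB1 : ∃ h ∈ P, ¬ (∃ i i' : Fin r, i ≠ i' ∧
        ∃ ℓ ∈ Miss (h i), ∃ ℓ' ∈ Miss (h i'), π h i ℓ = π h i' ℓ')
    · -- a plentiful non-conflicted edge: construct
      obtain ⟨h, hhP, hconf⟩ := hB1
      have hhE : h ∈ E := hEfin.mem_toFinset.1 (Finset.mem_filter.1 hhP).1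
      have hhT : r ≤ ∑ i : Fin r, M (h i) := (Finset.mem_filter.1 hhP).2
      set Qall : Finset (V × ℕ) :=
        Finset.univ.biUnion (fun i : Fin r => (Miss (h i)).image (fun ℓ => (h i, ℓ))) with hQall
      have hinj : ∀ i : Fin r, Function.Injective (fun ℓ => ((h i, ℓ) : V × ℕ)) :=
        fun i a b hab => (Prod.ext_iff.1 hab).2
      have hQallcard : r ≤ Qall.card := by
        rw [hQall, Finset.card_biUnion]
        · calc r ≤ ∑ i : Fin r, M (h i) := hhT
            _ = ∑ i : Fin r, ((Miss (h i)).image (fun ℓ => (h i, ℓ))).card :=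
                Finset.sum_congr rfl
                  (fun i _ => (Finset.card_image_of_injective _ (hinj i)).symm)
        · intro i _ j _ hij
          apply Finset.disjoint_left.2
          rintro q hqi hqj
          obtain ⟨ℓ, _, rfl⟩ := Finset.mem_image.1 hqi
          obtain ⟨ℓ', _, hq'⟩ := Finset.mem_image.1 hqj
          have heq : h j = h i := (Prod.ext_iff.1 hq').1
          have hji := hE h hhE j
          rw [heq, hE h hhE i] at hji
          exact hij hji
      obtain ⟨Q, hQsub, hQcard⟩ := Finset.exists_subset_card_eq hQallcard
      have hQmem : ∀ q ∈ Q, ∃ i : Fin r, q.1 = h i ∧ q.2 ∈ Miss (h i) := by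
        intro q hq
        have hmem := hQsub hq
        rw [hQall] at hmem
        obtain ⟨i, _, hmem2⟩ := Finset.mem_biUnion.1 hmem
        obtain ⟨ℓ, hℓ, rfl⟩ := Finset.mem_image.1 hmem2
        exact ⟨i, rfl, hℓ⟩
      apply construction hr hC part E π n A hAint x hx1 hx2 F hFsub hFne h hhE Q hQcard
      · rintro ⟨w, ℓ⟩ hq
        obtain ⟨i, hw, hℓ⟩ := hQmem _ hq
        dsimp only at hw hℓ ⊢
        subst hw
        exact ⟨⟨i, rfl⟩, hMissIcc _ _ hℓ, hMissF _ _ hℓ⟩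
      · rintro ⟨w, ℓ⟩ hq ⟨w', ℓ'⟩ hq' hπ
        obtain ⟨i, hw, hℓ⟩ := hQmem _ hq
        obtain ⟨i', hw', hℓ'⟩ := hQmem _ hq'
        dsimp only at hw hℓ hw' hℓ' hπ ⊢
        subst hw
        subst hw'
        have hpi := hE h hhE i
        have hpi' := hE h hhE i'
        rw [hpi, hpi'] at hπ ⊢
        by_contra hne
        exact hconf ⟨i, i', hne, ℓ, hℓ, ℓ', hℓ', hπ⟩
    · -- all plentiful edges conflicted: contradiction with soundness
      exfalso
      push_neg at hB1
      haveI : Nonempty (Fin r) := ⟨⟨0, lt_of_lt_of_le two_pos hr⟩⟩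
      set lab : V → ℕ → ℕ := fun v t => ((Miss v).sort (· ≤ ·)).getD t 1 with hlab
      have hsortlen : ∀ v, ((Miss v).sort (· ≤ ·)).length = M v :=
        fun v => Finset.length_sort _
      have hlabIcc : ∀ v t, lab v t ∈ Set.Icc 1 (n (part v)) := by
        intro v t
        rw [hlab]
        dsimp only
        by_cases hlt : t < ((Miss v).sort (· ≤ ·)).length
        · rw [List.getD_eq_getElem _ _ hlt]
          exact hMissIcc v _ ((Finset.mem_sort _).1 (List.getElem_mem hlt))
        · rw [List.getD_eq_default _ _ (Nat.le_of_not_lt hlt)]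
          exact Set.mem_Icc.2 ⟨le_refl 1, le_trans one_le_two (hn (part v))⟩
      have hlabsurj : ∀ v, ∀ ℓ ∈ Miss v, ∃ t : ℕ, t < r ∧ lab v t = ℓ := by
        intro v ℓ hℓ
        have hmem : ℓ ∈ (Miss v).sort (· ≤ ·) := (Finset.mem_sort _).2 hℓ
        have hidx : ((Miss v).sort (· ≤ ·)).idxOf ℓ < ((Miss v).sort (· ≤ ·)).length :=
          List.idxOf_lt_length_iff.2 hmem
        refine ⟨((Miss v).sort (· ≤ ·)).idxOf ℓ, ?_, ?_⟩
        · have h1 : M v < r := hA v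
          have h2 := hsortlen v
          rw [h2] at hidx
          exact lt_trans hidx h1
        · rw [hlab]
          dsimp only
          rw [List.getD_eq_getElem _ _ hidx]
          exact List.getElem_idxOf hidx
      have hwit : ∀ h : Fin r → V, ∃ k : Fin r × Fin r × Fin r × Fin r, h ∈ P →
          k.1 ≠ k.2.1 ∧
            π h k.1 (lab (h k.1) k.2.2.1) = π h k.2.1 (lab (h k.2.1) k.2.2.2) := by
        intro h
        by_cases hhP : h ∈ P
        · obtain ⟨i, i', hne, ℓ, hℓ, ℓ', hℓ', heq⟩ := hB1 h hhP
          obtain ⟨a, ha, hla⟩ := hlabsurj _ _ hℓ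
          obtain ⟨b, hb, hlb⟩ := hlabsurj _ _ hℓ'
          refine ⟨⟨i, i', ⟨a, ha⟩, ⟨b, hb⟩⟩, fun _ => ⟨hne, ?_⟩⟩
          show π h i (lab (h i) a) = π h i' (lab (h i') b)
          rw [hla, hlb]
          exact heq
        · exact ⟨⟨⟨0, lt_of_lt_of_le two_pos hr⟩, ⟨0, lt_of_lt_of_le two_pos hr⟩,
              ⟨0, lt_of_lt_of_le two_pos hr⟩, ⟨0, lt_of_lt_of_le two_pos hr⟩⟩,
            fun hc => absurd hc hhP⟩
      choose key hkey using hwit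
      have hfibsum : P.card
          = ∑ k : Fin r × Fin r × Fin r × Fin r, (P.filter (fun h => key h = k)).card :=
        Finset.card_eq_sum_card_fiberwise (fun h _ => Finset.mem_univ _)
      have hKcard : Fintype.card (Fin r × Fin r × Fin r × Fin r) = r^4 := by
        simp only [Fintype.card_prod, Fintype.card_fin]
        ring
      have hsumle : ∑ _k : Fin r × Fin r × Fin r × Fin r, P.card
          ≤ ∑ k : Fin r × Fin r × Fin r × Fin r, r^4 * (P.filter (fun h => key h = k)).card := by
        have l1 : ∑ _k : Fin r × Fin r × Fin r × Fin r, P.card = r^4 * P.card := by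
          rw [Finset.sum_const, Finset.card_univ, hKcard, smul_eq_mul]
        have l2 : ∑ k : Fin r × Fin r × Fin r × Fin r, r^4 * (P.filter (fun h => key h = k)).card
            = r^4 * P.card := by
          rw [← Finset.mul_sum, ← hfibsum]
        rw [l1, l2]
      obtain ⟨k, -, hk⟩ := Finset.exists_le_of_sum_le Finset.univ_nonempty hsumle
      set fib : Finset (Fin r → V) := P.filter (fun h => key h = k) with hfibdef
      have hfibpos : 0 < fib.card := by
        rcases Nat.eq_zero_or_pos fib.card with h0 | h1
        · exfalso
          rw [h0, mul_zero, Nat.le_zero] at hk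
          rw [hk, zero_mul] at hPbound
          exact Nat.not_succ_le_zero 0 (le_trans hEpos hPbound)
        · exact h1
      obtain ⟨h₁, hh₁⟩ := Finset.card_pos.1 hfibpos
      obtain ⟨i, i', a, b⟩ := k
      have hh₁P : h₁ ∈ P := (Finset.mem_filter.1 hh₁).1
      have hh₁k : key h₁ = (i, i', a, b) := (Finset.mem_filter.1 hh₁).2
      have hw₁ := hkey h₁ hh₁P
      rw [hh₁k] at hw₁
      have hne : i ≠ i' := hw₁.1
      set σ : V → ℕ :=
        fun v => if part v = i then lab v ↑a else if part v = i' then lab v ↑b else 1 with hσ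
      have hσvalid : ∀ v, σ v ∈ Set.Icc 1 (n (part v)) := by
        intro v
        rw [hσ]
        dsimp only
        split_ifs
        · exact hlabIcc v a
        · exact hlabIcc v b
        · exact Set.mem_Icc.2 ⟨le_refl 1, le_trans one_le_two (hn (part v))⟩
      have hsub2 : ∀ h₂ ∈ fib, h₂ ∈ E ∧ ∃ v v' : V, MemEdge h₂ v ∧ MemEdge h₂ v' ∧ v ≠ v' ∧
          π h₂ (part v) (σ v) = π h₂ (part v') (σ v') := by
        intro h₂ hh₂
        rw [hfibdef, Finset.mem_filter] at hh₂
        obtain ⟨hh₂P, hh₂k⟩ := hh₂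
        have hh₂E : h₂ ∈ E := hEfin.mem_toFinset.1 (Finset.mem_filter.1 hh₂P).1
        have hw₂ := hkey h₂ hh₂P
        rw [hh₂k] at hw₂
        have hpi : part (h₂ i) = i := hE h₂ hh₂E i
        have hpi' : part (h₂ i') = i' := hE h₂ hh₂E i'
        refine ⟨hh₂E, h₂ i, h₂ i', ⟨i, rfl⟩, ⟨i', rfl⟩, ?_, ?_⟩
        · intro hcc
          apply hne
          rw [← hpi, hcc, hpi']
        · have hσ1 : σ (h₂ i) = lab (h₂ i) ↑a := by
            rw [hσ]; dsimp only; rw [if_pos hpi]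
          have hσ2 : σ (h₂ i') = lab (h₂ i') ↑b := by
            rw [hσ]; dsimp only
            rw [if_neg (by rw [hpi']; exact fun hcc => hne hcc.symm), if_pos hpi']
          rw [hpi, hpi', hσ1, hσ2]
          exact hw₂.2
      have hSatfin : ({h | h ∈ E ∧ ∃ v v' : V, MemEdge h v ∧ MemEdge h v' ∧ v ≠ v' ∧
          π h (part v) (σ v) = π h (part v') (σ v')}).Finite :=
        hEfin.subset (fun h hh => hh.1)
      have hcard1 : fib.card ≤ ({h | h ∈ E ∧ ∃ v v' : V, MemEdge h v ∧ MemEdge h v' ∧ v ≠ v' ∧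
          π h (part v) (σ v) = π h (part v') (σ v')}).ncard := by
        rw [← Set.ncard_coe_finset fib]
        exact Set.ncard_le_ncard (fun h₂ hh₂ => hsub2 h₂ hh₂) hSatfin
      have hsnd := hsound σ hσvalid
      have c1 : (Efin.card : ℝ) ≤ (P.card : ℝ) * ((r : ℝ) * r) := by exact_mod_cast hPbound
      have c2 : (P.card : ℝ) ≤ (r : ℝ)^4 * (fib.card : ℝ) := by exact_mod_cast hk
      have c3 : (fib.card : ℝ) ≤ δ * (Efin.card : ℝ) := by
        calc (fib.card : ℝ)
            ≤ (({h | h ∈ E ∧ ∃ v v' : V, MemEdge h v ∧ MemEdge h v' ∧ v ≠ v' ∧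
                π h (part v) (σ v) = π h (part v') (σ v')}).ncard : ℝ) := by exact_mod_cast hcard1
          _ ≤ δ * (E.ncard : ℝ) := hsnd
          _ = δ * (Efin.card : ℝ) := by rw [hEcard]
      have c4 : (1 : ℝ) ≤ (Efin.card : ℝ) := by exact_mod_cast hEpos
      have d1 : (Efin.card : ℝ) ≤ (r : ℝ)^4 * (fib.card : ℝ) * ((r : ℝ) * r) :=
        le_trans c1 (mul_le_mul_of_nonneg_right c2 (by positivity))
      have d2 : (r : ℝ)^4 * (fib.card : ℝ) * ((r : ℝ) * r) = (r : ℝ)^6 * (fib.card : ℝ) := by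
        ring
      have d3 : (r : ℝ)^6 * (fib.card : ℝ) ≤ (r : ℝ)^6 * (δ * (Efin.card : ℝ)) :=
        mul_le_mul_of_nonneg_left c3 (by positivity)
      have d3' : (r : ℝ)^6 * (δ * (Efin.card : ℝ)) = ((r : ℝ)^6 * δ) * (Efin.card : ℝ) := by
        ring
      have d4 : (Efin.card : ℝ) ≤ ((r : ℝ)^6 * δ) * (Efin.card : ℝ) := by linarith
      have d5 : (1 : ℝ) ≤ (r : ℝ)^6 * δ := by
        by_contra hlt
        push_neg at hlt
        have hEpos' : (0 : ℝ) < (Efin.card : ℝ) := by linarith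
        have := mul_lt_mul_of_pos_right hlt hEpos'
        rw [one_mul] at this
        linarith
      have d6 : (r : ℝ) ≤ (r : ℝ)^7 * δ := by
        have h6 : (r : ℝ) * 1 ≤ (r : ℝ) * ((r : ℝ)^6 * δ) :=
          mul_le_mul_of_nonneg_left d5 (by positivity)
        calc (r : ℝ) = (r : ℝ) * 1 := by ring
          _ ≤ (r : ℝ) * ((r : ℝ)^6 * δ) := h6
          _ = (r : ℝ)^7 * δ := by ring
      have hr2 : (2 : ℝ) ≤ (r : ℝ) := by exact_mod_cast hr
      linarith
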